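/- arXiv:2405.10994 — 3 statements merged into one kernel-verified Lean document; each statement's English description precedes it below -/
import Mathlib

section
/- Lower boundary of the privacy region: let M be an (ε, δ)-differentially private mechanism with respect to a symmetric neighboring relation, let D, D' be neighboring datasets, and let S be any measurable subset of the output space. Define the false positive rate α = Pr[M(D) ∈ S] and the false negative rate β = Pr[M(D') ∉ S]. Then α + e^ε · β ≥ 1 − δ and e^ε · α + β ≥ 1 − δ. -/
open MeasureTheory

/-- A randomized mechanism `M` is `(ε, δ)`-differentially private with respect to a
neighboring relation `Neighbor` if for all neighboring datasets `d, d'` and all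
measurable sets `S`, `Pr[M d ∈ S] ≤ exp ε * Pr[M d' ∈ S] + δ`. -/
def IsDP {D R : Type*} [MeasurableSpace R] (M : D → Measure R)
    (Neighbor : D → D → Prop) (ε δ : ℝ) : Prop :=
  ∀ d d' : D, Neighbor d d' → ∀ S : Set R, MeasurableSet S →
    ((M d) S).toReal ≤ Real.exp ε * ((M d') S).toReal + δ

/-- Lower boundary of the privacy region: for an `(ε, δ)`-DP mechanism (with respect to
a symmetric neighboring relation), neighboring datasets `d, d'`, and a measurable
rejection region `S`, with false positive rate `α = Pr[M d ∈ S]` and false negative rate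
`β = Pr[M d' ∉ S]`, we have `α + exp ε * β ≥ 1 - δ` and `exp ε * α + β ≥ 1 - δ`. -/
theorem privacy_region_lower_boundary {D R : Type*} [MeasurableSpace R]
    (M : D → Measure R) [∀ d, IsProbabilityMeasure (M d)]
    (Neighbor : D → D → Prop) (hsymm : Symmetric Neighbor)
    (ε δ : ℝ) (hε : 0 ≤ ε) (hδ0 : 0 ≤ δ) (hδ1 : δ ≤ 1)
    (hM : IsDP M Neighbor ε δ)
    (d d' : D) (hN : Neighbor d d') (S : Set R) (hS : MeasurableSet S) :
    1 - δ ≤ ((M d) S).toReal + Real.exp ε * ((M d') Sᶜ).toReal ∧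
    1 - δ ≤ Real.exp ε * ((M d) S).toReal + ((M d') Sᶜ).toReal := by
  have hcd : ((M d) Sᶜ).toReal = 1 - ((M d) S).toReal := by
    rw [prob_compl_eq_one_sub hS]
    rw [ENNReal.toReal_sub_of_le prob_le_one (by simp)]
    simp
  have hcd' : ((M d') Sᶜ).toReal = 1 - ((M d') S).toReal := by
    rw [prob_compl_eq_one_sub hS]
    rw [ENNReal.toReal_sub_of_le prob_le_one (by simp)]
    simp
  have h1 := hM d d' hN Sᶜ hS.compl
  have h2 := hM d' d (hsymm hN) S hS
  constructor
  · rw [hcd] at h1; linarith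
  · rw [hcd']; linarith
end

section
/- Validity of the empirical privacy estimate: let M be an (ε, δ)-differentially private mechanism with respect to a symmetric neighboring relation, let D, D' be neighboring datasets, and let S be any measurable subset of the output space, with false positive rate α = Pr[M(D) ∈ S] and false negative rate β = Pr[M(D') ∉ S], where α > 0 and β > 0. Then ε ≥ ε_emp, where ε_emp = max{ ln((1 − α − δ)/β), ln((1 − β − δ)/α), 0 }. In particular, for a pure ε-differentially private mechanism (δ = 0), ε ≥ max{ ln((1 − α)/β), ln((1 − β)/α), 0 }. -/
open MeasureTheory

/-- The empirical privacy estimate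
`ε_emp = max { ln((1 − α − δ)/β), ln((1 − β − δ)/α), 0 }`, where a logarithm term whose
argument is nonpositive does not contribute to the maximum. -/
noncomputable def epsEmp (δ α β : ℝ) : ℝ :=
  max (max (if 0 < (1 - α - δ) / β then Real.log ((1 - α - δ) / β) else 0)
           (if 0 < (1 - β - δ) / α then Real.log ((1 - β - δ) / α) else 0)) 0

lemma compl_toReal {R : Type*} [MeasurableSpace R] (μ : Measure R)
    [IsProbabilityMeasure μ] {S : Set R} (hS : MeasurableSet S) :
    (μ Sᶜ).toReal = 1 - (μ S).toReal := by
  rw [prob_compl_eq_one_sub hS, ENNReal.toReal_sub_of_le prob_le_one (by simp)]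
  simp

/-- Validity of the empirical privacy estimate: for an `(ε, δ)`-DP mechanism (with
respect to a symmetric neighboring relation), neighboring datasets `d, d'`, and a
measurable rejection region `S` with false positive rate `α = Pr[M d ∈ S] > 0` and false
negative rate `β = Pr[M d' ∉ S] > 0`, the empirical estimate
`ε_emp = max { ln((1 − α − δ)/β), ln((1 − β − δ)/α), 0 }` is a lower bound on `ε`. -/
theorem empirical_estimate_valid {D R : Type*} [MeasurableSpace R]
    (M : D → Measure R) [∀ d, IsProbabilityMeasure (M d)]
    (Neighbor : D → D → Prop) (hsymm : Symmetric Neighbor)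
    (ε δ : ℝ) (hε : 0 ≤ ε) (hδ0 : 0 ≤ δ) (hδ1 : δ ≤ 1)
    (hM : IsDP M Neighbor ε δ)
    (d d' : D) (hN : Neighbor d d') (S : Set R) (hS : MeasurableSet S)
    (hα : 0 < ((M d) S).toReal) (hβ : 0 < ((M d') Sᶜ).toReal) :
    epsEmp δ (((M d) S).toReal) (((M d') Sᶜ).toReal) ≤ ε := by
  set α := ((M d) S).toReal with hαdef
  set β := ((M d') Sᶜ).toReal with hβdef
  -- 1 - α ≤ e^ε β + δ
  have h1 : 1 - α ≤ Real.exp ε * β + δ := by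
    have := hM d d' hN Sᶜ hS.compl
    rwa [compl_toReal (M d) hS] at this
  -- 1 - β ≤ e^ε α + δ
  have h2 : 1 - β ≤ Real.exp ε * α + δ := by
    have := hM d' d (hsymm hN) S hS
    have hcc : ((M d') S).toReal = 1 - β := by
      rw [hβdef, compl_toReal (M d') hS]; ring
    rwa [hcc] at this
  have key : ∀ x y : ℝ, 0 < y → 1 - x ≤ Real.exp ε * y + δ →
      (if 0 < (1 - x - δ) / y then Real.log ((1 - x - δ) / y) else 0) ≤ ε := by
    intro x y hy h
    split_ifs with hpos
    · have : (1 - x - δ) / y ≤ Real.exp ε := by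
        rw [div_le_iff₀ hy]; linarith
      calc Real.log ((1 - x - δ) / y) ≤ Real.log (Real.exp ε) :=
            Real.log_le_log hpos this
        _ = ε := Real.log_exp ε
    · exact hε
  exact max_le (max_le (key α β hβ h1) (key β α hα h2)) hε
end

section
/- Maximum auditable ε: fix δ ∈ [0,1] and a constant c with 0 < c < 1. If the (upper-bounded) false positive and false negative rates satisfy ᾱ ≥ c and β̄ ≥ c with ᾱ, β̄ < 1, then the empirical privacy estimate satisfies ε_emp = max{ ln((1 − ᾱ − δ)/β̄), ln((1 − β̄ − δ)/ᾱ), 0 } ≤ max{ ln((1 − c − δ)/c), 0 }. Hence, whenever the confidence-interval construction forces the rate upper bounds to be at least c, no empirical estimate larger than max{ ln((1 − c − δ)/c), 0 } can be obtained, even for an adversary who distinguishes perfectly. -/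
lemma term_le (δ c x y : ℝ) (hc0 : 0 < c) (hx : c ≤ x) (hy : c ≤ y) :
    (if 0 < (1 - x - δ) / y then Real.log ((1 - x - δ) / y) else 0) ≤
      max (if 0 < (1 - c - δ) / c then Real.log ((1 - c - δ) / c) else 0) 0 := by
  by_cases h : 0 < (1 - x - δ) / y
  · have hy0 : 0 < y := lt_of_lt_of_le hc0 hy
    have hnum : 0 < 1 - x - δ := by
      by_contra hne
      push_neg at hne
      have : (1 - x - δ) / y ≤ 0 := div_nonpos_of_nonpos_of_nonneg hne hy0.le
      linarith
    have hnumc : 0 < 1 - c - δ := by linarith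
    have hc' : 0 < (1 - c - δ) / c := div_pos hnumc hc0
    rw [if_pos h, if_pos hc']
    refine le_max_of_le_left ?_
    apply Real.log_le_log h
    exact div_le_div₀ (by linarith) (by linarith) hc0 hy
  · rw [if_neg h]
    exact le_max_right _ _

/-- Maximum auditable `ε`: fix `δ ∈ [0,1]` and `0 < c < 1`. If the upper-bounded false
positive and false negative rates satisfy `c ≤ ᾱ < 1` and `c ≤ β̄ < 1`, then
`ε_emp = max { ln((1 − ᾱ − δ)/β̄), ln((1 − β̄ − δ)/ᾱ), 0 } ≤ max { ln((1 − c − δ)/c), 0 }`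
(where a logarithm with nonpositive argument does not contribute to the maximum). -/
theorem max_auditable_eps (δ c αBar βBar : ℝ)
    (hδ0 : 0 ≤ δ) (hδ1 : δ ≤ 1)
    (hc0 : 0 < c) (hc1 : c < 1)
    (hαBar : c ≤ αBar) (hαBar1 : αBar < 1)
    (hβBar : c ≤ βBar) (hβBar1 : βBar < 1) :
    epsEmp δ αBar βBar ≤
      max (if 0 < (1 - c - δ) / c then Real.log ((1 - c - δ) / c) else 0) 0 := by
  unfold epsEmp
  refine max_le (max_le ?_ ?_) (le_max_right _ _)
  · exact term_le δ c αBar βBar hc0 hαBar hβBar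
  · exact term_le δ c βBar αBar hc0 hβBar hαBar
end
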